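/- Let ε ≥ 0 and suppose v, w ∈ [0,1]^N satisfy v_i ≤ w_i ≤ v_i + ε/K for every i ∈ [N]. Then θ_v ≤ θ_w ≤ θ_v + ε, where θ_u = max_{S ⊆ [N], |S| ≤ K} R(S, u). -/

import Mathlib

/-- The expected reward `R(S, v)` of an assortment `S`. -/
noncomputable def Rew {N : ℕ} (r v : Fin N → ℝ) (S : Finset (Fin N)) : ℝ :=
  (∑ i ∈ S, r i * v i) / (1 + ∑ i ∈ S, v i)

/-- `θ_v`: the optimal expected reward over assortments of size at most `K`. -/
noncomputable def thetaOpt (N K : ℕ) (r v : Fin N → ℝ) : ℝ :=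
  ((Finset.univ : Finset (Fin N)).powerset.filter (fun S => S.card ≤ K)).sup'
    ⟨∅, by simp⟩ (Rew r v)

/- `Top([N], w, θ)`: take the `min {K, N}` items `i` with the largest values
`(r i − θ) * w i` (ties broken in favor of smaller index), then remove all items
with `r i − θ ≤ 0`. -/
open Classical in
noncomputable def TopSet (N K : ℕ) (r w : Fin N → ℝ) (θ : ℝ) : Finset (Fin N) :=
  ((List.insertionSort (fun i j =>
      (r j - θ) * w j < (r i - θ) * w i ∨
      ((r i - θ) * w i = (r j - θ) * w j ∧ i ≤ j)) (List.finRange N)).take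
    (min K N)).toFinset.filter (fun i => θ < r i)
/-- If `v_i ≤ w_i ≤ v_i + ε/K` for all `i`, then `θ_v ≤ θ_w ≤ θ_v + ε`. -/
theorem stmt6 (N K : ℕ) (hK : 1 ≤ K) (hKN : K ≤ N) (r v w : Fin N → ℝ) (ε : ℝ)
    (hε : 0 ≤ ε) (hr : ∀ i, 0 < r i ∧ r i ≤ 1) (hv : ∀ i, 0 ≤ v i ∧ v i ≤ 1)
    (hw : ∀ i, 0 ≤ w i ∧ w i ≤ 1)
    (hvw : ∀ i, v i ≤ w i ∧ w i ≤ v i + ε / K) :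
    thetaOpt N K r v ≤ thetaOpt N K r w ∧
      thetaOpt N K r w ≤ thetaOpt N K r v + ε := by
  classical
  set F := ((Finset.univ : Finset (Fin N)).powerset.filter
      (fun S => S.card ≤ K)) with hF
  have hneF : F.Nonempty := ⟨∅, by simp [hF]⟩
  have hmemF : ∀ S : Finset (Fin N), S ∈ F ↔ S.card ≤ K := by
    intro S; simp [hF]
  have hεK : 0 ≤ ε / K := by positivity
  have hdenv : ∀ S : Finset (Fin N), 0 < 1 + ∑ i ∈ S, v i := by
    intro S
    have : (0:ℝ) ≤ ∑ i ∈ S, v i := Finset.sum_nonneg fun i _ => (hv i).1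
    linarith
  have hdenw : ∀ S : Finset (Fin N), 0 < 1 + ∑ i ∈ S, w i := by
    intro S
    have : (0:ℝ) ≤ ∑ i ∈ S, w i := Finset.sum_nonneg fun i _ => (hw i).1
    linarith
  set θ := thetaOpt N K r v with hθ
  have hle : ∀ S : Finset (Fin N), S.card ≤ K → Rew r v S ≤ θ := by
    intro S hS
    exact Finset.le_sup' (Rew r v) ((hmemF S).2 hS)
  have hθ0 : 0 ≤ θ := by
    have h := hle ∅ (by simp)
    simpa [Rew] using h
  -- key transform: Rew bounds ↔ linear bounds
  constructor
  · -- θ_v ≤ θ_w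
    obtain ⟨S, hSm, hSeq⟩ := Finset.exists_mem_eq_sup' hneF (Rew r v)
    have hScard : S.card ≤ K := (hmemF S).1 hSm
    set S' := S.filter (fun i => θ < r i) with hS'
    have hS'card : S'.card ≤ K := le_trans (Finset.card_le_card (Finset.filter_subset _ S)) hScard
    -- Σ_{S} (r-θ) v = θ
    have hsum : ∑ i ∈ S, (r i - θ) * v i = θ := by
      have hEq' : θ = Rew r v S := hSeq
      have hEq : θ = (∑ i ∈ S, r i * v i) / (1 + ∑ i ∈ S, v i) := by
        rw [hEq', Rew]
      have hd := hdenv S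
      have : θ * (1 + ∑ i ∈ S, v i) = ∑ i ∈ S, r i * v i := by
        field_simp at hEq; linarith [hEq]
      have expand : ∑ i ∈ S, (r i - θ) * v i
          = (∑ i ∈ S, r i * v i) - θ * ∑ i ∈ S, v i := by
        rw [Finset.mul_sum, ← Finset.sum_sub_distrib]
        apply Finset.sum_congr rfl; intro i _; ring
      rw [expand]; linarith
    -- dropping nonpositive terms
    have hsum' : θ ≤ ∑ i ∈ S', (r i - θ) * v i := by
      have hsplit := Finset.sum_filter_add_sum_filter_not S (fun i => θ < r i)
        (fun i => (r i - θ) * v i)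
      have hnonpos : ∑ i ∈ S.filter (fun i => ¬ θ < r i), (r i - θ) * v i ≤ 0 := by
        apply Finset.sum_nonpos
        intro i hi
        have hi' := (Finset.mem_filter.1 hi).2
        have : r i ≤ θ := not_lt.1 hi'
        have := (hv i).1
        nlinarith
      rw [hsum] at hsplit
      rw [hS']; linarith
    -- v ≤ w on S' (coefficients nonneg)
    have hsum'' : θ ≤ ∑ i ∈ S', (r i - θ) * w i := by
      refine le_trans hsum' (Finset.sum_le_sum ?_)
      intro i hi
      have hi' := (Finset.mem_filter.1 hi).2
      have h1 : 0 ≤ r i - θ := by linarith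
      exact mul_le_mul_of_nonneg_left (hvw i).1 h1
    -- conclude Rew r w S' ≥ θ
    have hnum : θ * (1 + ∑ i ∈ S', w i) ≤ ∑ i ∈ S', r i * w i := by
      have expand : ∑ i ∈ S', (r i - θ) * w i
          = (∑ i ∈ S', r i * w i) - θ * ∑ i ∈ S', w i := by
        rw [Finset.mul_sum, ← Finset.sum_sub_distrib]
        apply Finset.sum_congr rfl; intro i _; ring
      rw [expand] at hsum''; linarith
    have hRw : θ ≤ Rew r w S' := by
      rw [Rew, le_div_iff₀ (hdenw S')]
      linarith
    exact le_trans hRw (Finset.le_sup' (Rew r w) ((hmemF S').2 hS'card))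
  · -- θ_w ≤ θ + ε
    apply Finset.sup'_le
    intro S hSm
    have hScard : S.card ≤ K := (hmemF S).1 hSm
    have hRv := hle S hScard
    have hd := hdenv S
    have hlin : ∑ i ∈ S, (r i - θ) * v i ≤ θ := by
      rw [Rew, div_le_iff₀ hd] at hRv
      have expand : ∑ i ∈ S, (r i - θ) * v i
          = (∑ i ∈ S, r i * v i) - θ * ∑ i ∈ S, v i := by
        rw [Finset.mul_sum, ← Finset.sum_sub_distrib]
        apply Finset.sum_congr rfl; intro i _; ring
      rw [expand]; nlinarith
    have hterm : ∀ i ∈ S, (r i - θ) * w i ≤ (r i - θ) * v i + ε / K := by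
      intro i _
      rcases le_or_gt (r i) θ with h | h
      · have := (hvw i).1
        nlinarith [(hv i).1, (hw i).1]
      · have h1 : 0 ≤ r i - θ := le_of_lt (by linarith)
        have h2 : r i - θ ≤ 1 := by have := (hr i).2; linarith
        have h3 := (hvw i).2
        have h4 := (hvw i).1
        nlinarith
    have hlinw : ∑ i ∈ S, (r i - θ) * w i ≤ θ + ε := by
      calc ∑ i ∈ S, (r i - θ) * w i ≤ ∑ i ∈ S, ((r i - θ) * v i + ε / K) :=
            Finset.sum_le_sum hterm
        _ = (∑ i ∈ S, (r i - θ) * v i) + S.card * (ε / K) := by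
            rw [Finset.sum_add_distrib]; simp [Finset.sum_const, nsmul_eq_mul]
        _ ≤ θ + S.card * (ε / K) := by linarith
        _ ≤ θ + ε := by
            have h1 : (S.card : ℝ) ≤ (K : ℝ) := by exact_mod_cast hScard
            have hK0 : (0:ℝ) < K := by positivity
            have : (S.card : ℝ) * (ε / K) ≤ K * (ε / K) :=
              mul_le_mul_of_nonneg_right h1 hεK
            have hKe : (K:ℝ) * (ε / K) = ε := by field_simp
            linarith
    have hdw := hdenw S
    rw [Rew, div_le_iff₀ hdw]
    have expand : ∑ i ∈ S, (r i - θ) * w i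
        = (∑ i ∈ S, r i * w i) - θ * ∑ i ∈ S, w i := by
      rw [Finset.mul_sum, ← Finset.sum_sub_distrib]
      apply Finset.sum_congr rfl; intro i _; ring
    have hsw : (0:ℝ) ≤ ∑ i ∈ S, w i := Finset.sum_nonneg fun i _ => (hw i).1
    nlinarith [expand]
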